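/- Suppose Σ is a nonzero Lévy–Khintchine function as in the collision mechanism and Ψ a Lévy–Khintchine function as in the branching mechanism. Then limsup_{u→∞} (−Ψ(u))/Σ(u) > 0 if and only if both limits μ := lim_{u→∞} (−Ψ(u))/u exists in (0,∞) and D := lim_{u→∞} Σ(u)/u exists in (0,∞); in that case limsup_{u→∞} (−Ψ(u))/Σ(u) = lim_{u→∞} (−Ψ(u))/Σ(u) = μ/D, and in particular z* := (limsup_{u→∞} (−Ψ(u))/Σ(u)) ∨ 0 is finite. -/

import Mathlib

open Set MeasureTheory Filter

lemma aux_lb (t : ℝ) : 1 - t ≤ Real.exp (-t) := by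
  have := Real.add_one_le_exp (-t); linarith

lemma aux_nonneg {t : ℝ} (ht : 0 ≤ t) : 0 ≤ Real.exp (-t) - 1 + t := by
  have := aux_lb t; linarith

lemma aux_le_t {t : ℝ} (ht : 0 ≤ t) : Real.exp (-t) - 1 + t ≤ t := by
  have : Real.exp (-t) ≤ 1 := Real.exp_le_one_iff.mpr (by linarith)
  linarith

lemma aux_le_sq {t : ℝ} (ht : 0 ≤ t) : Real.exp (-t) - 1 + t ≤ t^2 := by
  have h1 : 1 - t ≤ Real.exp (-t) := aux_lb t
  have h2 : Real.exp (-t) * (1 + t) ≤ 1 := by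
    have := Real.add_one_le_exp t
    have hp := Real.exp_pos (-t)
    calc Real.exp (-t) * (1 + t) ≤ Real.exp (-t) * Real.exp t := by
          apply mul_le_mul_of_nonneg_left (by linarith) hp.le
      _ = 1 := by rw [← Real.exp_add]; simp
  nlinarith [Real.exp_pos (-t)]

lemma aux_slope {s u v : ℝ} (hs : 0 ≤ s) (hu : 0 < u) (huv : u ≤ v) :
    (Real.exp (-u*s) - 1)/u ≤ (Real.exp (-v*s) - 1)/v := by
  have hv : 0 < v := lt_of_lt_of_le hu huv
  have ht1 : (0:ℝ) ≤ u/v := div_nonneg hu.le hv.le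
  have ht2 : (0:ℝ) ≤ 1 - u/v := by
    have : u/v ≤ 1 := (div_le_one hv).mpr huv
    linarith
  have key := convexOn_exp.2 (mem_univ (-v*s)) (mem_univ (0:ℝ)) ht1 ht2 (by ring)
  simp only [smul_eq_mul, mul_zero, add_zero, Real.exp_zero, mul_one] at key
  have hcomb : u/v * (-v*s) = -u*s := by field_simp
  rw [hcomb] at key
  rw [div_le_div_iff₀ hu hv]
  have h2 : v * (u/v * Real.exp (-v*s) + (1 - u/v)) = u * Real.exp (-v*s) + (v - u) := by
    field_simp
  nlinarith [mul_le_mul_of_nonneg_left key hv.le]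

lemma int_min_eta (η : Measure ℝ)
    (hη : ∫⁻ h in Ioi (0:ℝ), ENNReal.ofReal (min h (h^2)) ∂η < ⊤) :
    IntegrableOn (fun h => min h (h^2)) (Ioi 0) η := by
  refine ⟨(continuous_id.min (continuous_pow 2)).aestronglyMeasurable, ?_⟩
  rw [hasFiniteIntegral_iff_ofReal]
  · exact hη
  · filter_upwards [self_mem_ae_restrict measurableSet_Ioi] with h hh
    exact le_min (le_of_lt hh) (sq_nonneg h)

lemma int_min_pi (π : Measure ℝ)
    (hπ : ∫⁻ h in Ioi (0:ℝ), ENNReal.ofReal (min 1 (h^2)) ∂π < ⊤) :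
    IntegrableOn (fun h => min 1 (h^2)) (Ioi 0) π := by
  refine ⟨(continuous_const.min (continuous_pow 2)).aestronglyMeasurable, ?_⟩
  rw [hasFiniteIntegral_iff_ofReal]
  · exact hπ
  · filter_upwards [self_mem_ae_restrict measurableSet_Ioi] with h hh
    exact le_min zero_le_one (sq_nonneg h)

lemma intEta (η : Measure ℝ)
    (hη : ∫⁻ h in Ioi (0:ℝ), ENNReal.ofReal (min h (h^2)) ∂η < ⊤)
    {x : ℝ} (hx : 0 ≤ x) :
    IntegrableOn (fun h => Real.exp (-x*h) - 1 + x*h) (Ioi 0) η := by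
  apply Integrable.mono' (((int_min_eta η hη).const_mul (max x (x^2))))
  · exact (((Real.continuous_exp.comp (continuous_const.mul continuous_id)).sub
      continuous_const).add (continuous_const.mul continuous_id)).aestronglyMeasurable
  · filter_upwards [self_mem_ae_restrict measurableSet_Ioi] with h hh
    have hh' : (0:ℝ) < h := hh
    have ht : 0 ≤ x*h := mul_nonneg hx hh'.le
    have e1 : -x*h = -(x*h) := by ring
    rw [Real.norm_eq_abs, e1, abs_of_nonneg (aux_nonneg ht)]
    rcases le_or_gt h 1 with h1 | h1
    · have hmin : min h (h^2) = h^2 := min_eq_right (by nlinarith)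
      rw [hmin]
      calc Real.exp (-(x*h)) - 1 + x*h ≤ (x*h)^2 := aux_le_sq ht
        _ = x^2 * h^2 := by ring
        _ ≤ max x (x^2) * h^2 := by nlinarith [le_max_right x (x^2), sq_nonneg h]
    · have hmin : min h (h^2) = h := min_eq_left (by nlinarith)
      rw [hmin]
      calc Real.exp (-(x*h)) - 1 + x*h ≤ x*h := aux_le_t ht
        _ ≤ max x (x^2) * h := by nlinarith [le_max_left x (x^2)]

lemma intPi (π : Measure ℝ)
    (hπ : ∫⁻ h in Ioi (0:ℝ), ENNReal.ofReal (min 1 (h^2)) ∂π < ⊤)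
    {x : ℝ} (hx : 0 ≤ x) :
    IntegrableOn (fun h => Real.exp (-x*h) - 1 + x*h*(if h ≤ 1 then 1 else 0)) (Ioi 0) π := by
  apply Integrable.mono' (((int_min_pi π hπ).const_mul (max 1 (x^2))))
  · apply Measurable.aestronglyMeasurable
    apply Measurable.add
    · exact ((Real.measurable_exp.comp (measurable_const.mul measurable_id)).sub measurable_const)
    · exact (measurable_const.mul measurable_id).mul
        (Measurable.ite measurableSet_Iic measurable_const measurable_const)
  · filter_upwards [self_mem_ae_restrict measurableSet_Ioi] with h hh
    have hh' : (0:ℝ) < h := hh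
    have ht : 0 ≤ x*h := mul_nonneg hx hh'.le
    have e1 : -x*h = -(x*h) := by ring
    rcases le_or_gt h 1 with h1 | h1
    · have hmin : min 1 (h^2) = h^2 := min_eq_right (by nlinarith)
      rw [if_pos h1, mul_one, Real.norm_eq_abs, e1, abs_of_nonneg (aux_nonneg ht), hmin]
      calc Real.exp (-(x*h)) - 1 + x*h ≤ (x*h)^2 := aux_le_sq ht
        _ = x^2 * h^2 := by ring
        _ ≤ max 1 (x^2) * h^2 := by nlinarith [le_max_right 1 (x^2), sq_nonneg h]
    · have hmin : min 1 (h^2) = 1 := min_eq_left (by nlinarith)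
      rw [if_neg (not_le.mpr h1), mul_zero, add_zero, Real.norm_eq_abs, hmin, mul_one]
      rw [abs_le]
      constructor
      · have := Real.exp_pos (-x*h); linarith [le_max_left 1 (x^2)]
      · have : Real.exp (-x*h) ≤ 1 := Real.exp_le_one_iff.mpr (by rw [e1]; linarith)
        linarith [le_max_left 1 (x^2)]

/-- `limsup_{u→∞} (−Ψ u)/Σ u > 0` iff both `(−Ψ u)/u → μ ∈ (0,∞)` and `Σ u / u → D ∈ (0,∞)`;
in that case the limsup is in fact a limit and equals `μ/D`. -/
theorem stmt2 (σ b a c : ℝ) (hσ : 0 ≤ σ) (ha : 0 ≤ a) (hc : 0 ≤ c)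
    (π η : Measure ℝ)
    (hπ : ∫⁻ h in Ioi (0:ℝ), ENNReal.ofReal (min 1 (h^2)) ∂π < ⊤)
    (hη : ∫⁻ h in Ioi (0:ℝ), ENNReal.ofReal (min h (h^2)) ∂η < ⊤)
    (Psi Sig : ℝ → ℝ)
    (hPsi : ∀ x, Psi x = σ^2/2 * x^2 - b*x +
      ∫ h in Ioi (0:ℝ), (Real.exp (-x*h) - 1 + x*h * (if h ≤ 1 then 1 else 0)) ∂π)
    (hSig : ∀ x, Sig x = a^2/2 * x^2 + c/2 * x +
      ∫ h in Ioi (0:ℝ), (Real.exp (-x*h) - 1 + x*h) ∂η)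
    (hSne : ∃ x > (0:ℝ), Sig x ≠ 0) :
    (0 < limsup (fun u => (-Psi u) / Sig u) atTop ↔
      ∃ μ D : ℝ, 0 < μ ∧ 0 < D ∧
        Tendsto (fun u => (-Psi u) / u) atTop (nhds μ) ∧
        Tendsto (fun u => Sig u / u) atTop (nhds D)) ∧
    (∀ μ D : ℝ, 0 < μ → 0 < D →
      Tendsto (fun u => (-Psi u) / u) atTop (nhds μ) →
      Tendsto (fun u => Sig u / u) atTop (nhds D) →
        limsup (fun u => (-Psi u) / Sig u) atTop = μ / D ∧
        Tendsto (fun u => (-Psi u) / Sig u) atTop (nhds (μ / D))) := by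
  -- notation
  -- q u := (-Psi u)/Sig u, f u := (-Psi u)/u, g u := Sig u / u
  have hq : ∀ u : ℝ, 0 < u → (-Psi u)/(Sig u) = ((-Psi u)/u) / (Sig u / u) := by
    intro u hu
    rcases eq_or_ne (Sig u) 0 with h0 | h0
    · simp [h0]
    · field_simp
  -- Sig nonneg
  have hSnonneg : ∀ x : ℝ, 0 ≤ x → 0 ≤ Sig x := by
    intro x hx
    rw [hSig x]
    have hI : 0 ≤ ∫ h in Ioi (0:ℝ), (Real.exp (-x*h) - 1 + x*h) ∂η := by
      apply setIntegral_nonneg measurableSet_Ioi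
      intro h hh
      have e1 : -x*h = -(x*h) := by ring
      rw [e1]
      exact aux_nonneg (mul_nonneg hx (le_of_lt hh))
    nlinarith [sq_nonneg a, sq_nonneg x, mul_nonneg hc hx]
  -- monotonicity of g
  have hgmono : ∀ u v : ℝ, 0 < u → u ≤ v → Sig u / u ≤ Sig v / v := by
    intro u v hu huv
    have hv : 0 < v := lt_of_lt_of_le hu huv
    have hint : (∫ h in Ioi (0:ℝ), (Real.exp (-u*h) - 1 + u*h)/u ∂η)
        ≤ ∫ h in Ioi (0:ℝ), (Real.exp (-v*h) - 1 + v*h)/v ∂η := by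
      apply setIntegral_mono_on ((intEta η hη hu.le).div_const u)
        ((intEta η hη hv.le).div_const v) measurableSet_Ioi
      intro h hh
      have hh' : (0:ℝ) < h := hh
      have e1 : (Real.exp (-u*h) - 1 + u*h)/u = (Real.exp (-u*h) - 1)/u + h := by
        field_simp
      have e2 : (Real.exp (-v*h) - 1 + v*h)/v = (Real.exp (-v*h) - 1)/v + h := by
        field_simp
      rw [e1, e2]
      exact add_le_add_left (aux_slope hh'.le hu huv) h
    have eu : Sig u / u = a^2/2*u + c/2 + ∫ h in Ioi (0:ℝ), (Real.exp (-u*h) - 1 + u*h)/u ∂η := by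
      rw [hSig u, integral_div]
      field_simp
    have ev : Sig v / v = a^2/2*v + c/2 + ∫ h in Ioi (0:ℝ), (Real.exp (-v*h) - 1 + v*h)/v ∂η := by
      rw [hSig v, integral_div]
      field_simp
    rw [eu, ev]
    have : a^2/2*u ≤ a^2/2*v := by nlinarith [sq_nonneg a]
    linarith
  -- antitonicity of f
  have hfanti : ∀ u v : ℝ, 0 < u → u ≤ v → (-Psi v)/v ≤ (-Psi u)/u := by
    intro u v hu huv
    have hv : 0 < v := lt_of_lt_of_le hu huv
    have hint : (∫ h in Ioi (0:ℝ), (Real.exp (-u*h) - 1 + u*h*(if h ≤ 1 then 1 else 0))/u ∂π)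
        ≤ ∫ h in Ioi (0:ℝ), (Real.exp (-v*h) - 1 + v*h*(if h ≤ 1 then 1 else 0))/v ∂π := by
      apply setIntegral_mono_on ((intPi π hπ hu.le).div_const u)
        ((intPi π hπ hv.le).div_const v) measurableSet_Ioi
      intro h hh
      have hh' : (0:ℝ) < h := hh
      have e1 : (Real.exp (-u*h) - 1 + u*h*(if h ≤ 1 then 1 else 0))/u
          = (Real.exp (-u*h) - 1)/u + h*(if h ≤ 1 then 1 else 0) := by
        field_simp
      have e2 : (Real.exp (-v*h) - 1 + v*h*(if h ≤ 1 then 1 else 0))/v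
          = (Real.exp (-v*h) - 1)/v + h*(if h ≤ 1 then 1 else 0) := by
        field_simp
      rw [e1, e2]
      exact add_le_add_left (aux_slope hh'.le hu huv) _
    have eu : (-Psi u) / u = -(σ^2/2*u) + b
        - ∫ h in Ioi (0:ℝ), (Real.exp (-u*h) - 1 + u*h*(if h ≤ 1 then 1 else 0))/u ∂π := by
      rw [hPsi u, integral_div]
      field_simp
      ring
    have ev : (-Psi v) / v = -(σ^2/2*v) + b
        - ∫ h in Ioi (0:ℝ), (Real.exp (-v*h) - 1 + v*h*(if h ≤ 1 then 1 else 0))/v ∂π := by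
      rw [hPsi v, integral_div]
      field_simp
      ring
    rw [eu, ev]
    have : σ^2/2*u ≤ σ^2/2*v := by nlinarith [sq_nonneg σ]
    linarith
  -- second bullet first
  have key2 : ∀ μ D : ℝ, 0 < μ → 0 < D →
      Tendsto (fun u => (-Psi u) / u) atTop (nhds μ) →
      Tendsto (fun u => Sig u / u) atTop (nhds D) →
        limsup (fun u => (-Psi u) / Sig u) atTop = μ / D ∧
        Tendsto (fun u => (-Psi u) / Sig u) atTop (nhds (μ / D)) := by
    intro μ D hμ hD hfT hgT
    have hdiv : Tendsto (fun u => ((-Psi u)/u) / (Sig u / u)) atTop (nhds (μ/D)) :=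
      hfT.div hgT hD.ne'
    have h2 : Tendsto (fun u => (-Psi u) / Sig u) atTop (nhds (μ/D)) := by
      apply hdiv.congr'
      filter_upwards [eventually_gt_atTop (0:ℝ)] with u hu
      exact (hq u hu).symm
    exact ⟨h2.limsup_eq, h2⟩
  refine ⟨⟨?_, ?_⟩, key2⟩
  · -- forward direction
    intro hL
    set L := limsup (fun u => (-Psi u) / Sig u) atTop with hLdef
    obtain ⟨x₀, hx₀, hSx₀⟩ := hSne
    have hd : 0 < Sig x₀ / x₀ :=
      div_pos (lt_of_le_of_ne (hSnonneg x₀ hx₀.le) (Ne.symm hSx₀)) hx₀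
    have hδpos : 0 < L/2 := by linarith
    have hfreq : ∃ᶠ u in atTop, L/2 < (-Psi u)/Sig u := by
      by_contra hcon
      rw [not_frequently] at hcon
      have hev : ∀ᶠ u in atTop, (-Psi u)/Sig u ≤ L/2 := hcon.mono fun u hu => not_lt.mp hu
      rcases em (BddBelow {a : ℝ | ∀ᶠ u in atTop, (-Psi u)/Sig u ≤ a}) with hb | hb
      · have : L ≤ L/2 := by
          rw [hLdef, limsup_eq]
          exact csInf_le hb hev
        linarith
      · have : L = 0 := by
          rw [hLdef, limsup_eq]
          exact Real.sInf_of_not_bddBelow hb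
        linarith
    -- lower bound for f on positives
    have hflb : ∀ v : ℝ, 0 < v → L/2 * (Sig x₀ / x₀) ≤ (-Psi v)/v := by
      intro v hv
      obtain ⟨u, hu1, hu2⟩ := (hfreq.and_eventually (eventually_ge_atTop (max v x₀))).exists
      have hux : x₀ ≤ u := le_trans (le_max_right _ _) hu2
      have huv : v ≤ u := le_trans (le_max_left _ _) hu2
      have hu0 : 0 < u := lt_of_lt_of_le hx₀ hux
      have hgu : Sig x₀ / x₀ ≤ Sig u / u := hgmono x₀ u hx₀ hux
      have hgupos : 0 < Sig u / u := lt_of_lt_of_le hd hgu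
      have hq' : L/2 < ((-Psi u)/u) / (Sig u / u) := by rw [← hq u hu0]; exact hu1
      have h1 : L/2 * (Sig u / u) < (-Psi u)/u := (lt_div_iff₀ hgupos).mp hq'
      have h2 : L/2 * (Sig x₀ / x₀) ≤ L/2 * (Sig u / u) :=
        mul_le_mul_of_nonneg_left hgu hδpos.le
      have h3 : (-Psi u)/u ≤ (-Psi v)/v := hfanti v u hv huv
      linarith
    -- limit of f
    have hf1anti : Antitone (fun u : ℝ => (-Psi (max u 1)) / (max u 1)) := by
      intro u v huv
      exact hfanti (max u 1) (max v 1) (lt_of_lt_of_le one_pos (le_max_right u 1))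
        (max_le_max huv le_rfl)
    have hf1bdd : BddBelow (range (fun u : ℝ => (-Psi (max u 1)) / (max u 1))) := by
      refine ⟨L/2 * (Sig x₀ / x₀), ?_⟩
      rintro w ⟨u, rfl⟩
      exact hflb _ (lt_of_lt_of_le one_pos (le_max_right u 1))
    have hf1T := tendsto_atTop_ciInf hf1anti hf1bdd
    have hfT : Tendsto (fun u => (-Psi u) / u) atTop
        (nhds (⨅ u : ℝ, (-Psi (max u 1)) / (max u 1))) := by
      apply hf1T.congr'
      filter_upwards [eventually_ge_atTop (1:ℝ)] with u hu
      rw [max_eq_left hu]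
    have hμpos : 0 < ⨅ u : ℝ, (-Psi (max u 1)) / (max u 1) := by
      have h1 : L/2 * (Sig x₀ / x₀) ≤ ⨅ u : ℝ, (-Psi (max u 1)) / (max u 1) :=
        le_ciInf fun u => hflb _ (lt_of_lt_of_le one_pos (le_max_right u 1))
      have h2 : 0 < L/2 * (Sig x₀ / x₀) := mul_pos hδpos hd
      linarith
    -- limit of g
    have hg1mono : Monotone (fun u : ℝ => Sig (max u 1) / (max u 1)) := by
      intro u v huv
      exact hgmono (max u 1) (max v 1) (lt_of_lt_of_le one_pos (le_max_right u 1))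
        (max_le_max huv le_rfl)
    have hg1bdd : BddAbove (range (fun u : ℝ => Sig (max u 1) / (max u 1))) := by
      by_contra hb
      have hgT : Tendsto (fun u : ℝ => Sig (max u 1) / (max u 1)) atTop atTop := by
        apply tendsto_atTop_atTop_of_monotone hg1mono
        intro bb
        rcases not_bddAbove_iff.mp hb bb with ⟨w, ⟨u, rfl⟩, hbu⟩
        exact ⟨u, hbu.le⟩
      have hgT' : Tendsto (fun u : ℝ => Sig u / u) atTop atTop := by
        apply hgT.congr'
        filter_upwards [eventually_ge_atTop (1:ℝ)] with u hu
        rw [max_eq_left hu]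
      have hC : 0 < (-Psi 1)/1 := by
        have := hflb 1 one_pos
        have h2 : 0 < L/2 * (Sig x₀ / x₀) := mul_pos hδpos hd
        linarith
      have hev : ∀ᶠ u in atTop, (-Psi u)/Sig u < L/2 := by
        filter_upwards [hgT'.eventually_gt_atTop ((-Psi 1)/1 / (L/2)),
          eventually_ge_atTop (1:ℝ)] with u hgu hu1
        have hu0 : (0:ℝ) < u := lt_of_lt_of_le one_pos hu1
        have hgupos : 0 < Sig u / u := lt_trans (div_pos hC hδpos) hgu
        rw [hq u hu0]
        have hfu : (-Psi u)/u ≤ (-Psi 1)/1 := hfanti 1 u one_pos hu1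
        have hlt : (-Psi 1)/1 < L/2 * (Sig u / u) := by
          have := (div_lt_iff₀ hδpos).mp hgu
          linarith
        rw [div_lt_iff₀ hgupos]
        linarith
      obtain ⟨u, h1, h2⟩ := (hfreq.and_eventually hev).exists
      exact absurd h1 (not_lt.mpr h2.le)
    have hg1T := tendsto_atTop_ciSup hg1mono hg1bdd
    have hgT : Tendsto (fun u => Sig u / u) atTop
        (nhds (⨆ u : ℝ, Sig (max u 1) / (max u 1))) := by
      apply hg1T.congr'
      filter_upwards [eventually_ge_atTop (1:ℝ)] with u hu
      rw [max_eq_left hu]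
    have hDpos : 0 < ⨆ u : ℝ, Sig (max u 1) / (max u 1) := by
      have h1 : Sig x₀ / x₀ ≤ Sig (max x₀ 1) / (max x₀ 1) :=
        hgmono x₀ (max x₀ 1) hx₀ (le_max_left _ _)
      have h2 : Sig (max x₀ 1) / (max x₀ 1) ≤ ⨆ u : ℝ, Sig (max u 1) / (max u 1) :=
        le_ciSup hg1bdd x₀
      linarith
    exact ⟨_, _, hμpos, hDpos, hfT, hgT⟩
  · -- backward direction
    rintro ⟨μ, D, hμ, hD, hfT, hgT⟩
    have h := key2 μ D hμ hD hfT hgT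
    rw [h.1]
    positivity
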